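/- For any word γ in {NE,D}^n, the sum over the paths γ_i in the sequence φ(γ) of q^{bounce(γ_i)} t^{area(γ_i)} equals the Schur polynomial s_{(bounce(γ))}(q,t) = q^b + q^{b-1}t + ... + t^b where b = bounce(γ). -/

import Mathlib

open scoped Classical

inductive Step : Type
  | N | E | D
deriving DecidableEq, Repr

instance : Fintype Step :=
  ⟨{Step.N, Step.E, Step.D}, by intro x; cases x <;> simp⟩

open Step

/-- number of occurrences of the letter `s` in the word `w` -/
def cnt (s : Step) (w : List Step) : ℕ := w.count s

/-- Schröder (or Dyck, if no `D`s) path in an `n × n` grid: every prefix has at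
least as many `N`s as `E`s, and the totals agree. -/
def IsSchroeder (w : List Step) : Prop :=
  (∀ p : List Step, p <+: w → cnt E p ≤ cnt N p) ∧ cnt N w = cnt E w

/-- words that are concatenations of blocks `NE` and `D` -/
inductive IsNED : List Step → Prop
  | nil : IsNED []
  | ne {w} : IsNED w → IsNED (N :: E :: w)
  | d {w} : IsNED w → IsNED (D :: w)

/-- area of a Schröder path: the number of lower triangles between the path and the
main diagonal, computed as the sum over `N` and `D` steps of the height
`#N - #E` of the starting point of the step above the diagonal. -/
def areaAux : ℕ → List Step → ℕ
  | _, [] => 0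
  | h, N :: w => h + areaAux (h+1) w
  | h, D :: w => h + areaAux h w
  | h, E :: w => areaAux (h-1) w

def area (w : List Step) : ℕ := areaAux 0 w

/-- area of an `N/E` lattice path in a rectangular grid: the number of boxes under
the path, i.e. the sum over `E` steps of the number of `N` steps before it. -/
def areaNEAux : ℕ → List Step → ℕ
  | _, [] => 0
  | h, N :: w => areaNEAux (h+1) w
  | h, E :: w => h + areaNEAux h w
  | h, D :: w => areaNEAux h w

def areaNE (w : List Step) : ℕ := areaNEAux 0 w

/-- number of `N`s occurring before the `(j+1)`-st `E` (`j` is 0-indexed);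
this is the height of the path above the horizontal interval `[j, j+1]`. -/
def nBefore : List Step → ℕ → ℕ
  | [], _ => 0
  | N :: w, j => 1 + nBefore w j
  | E :: w, j => if j = 0 then 0 else nBefore w (j-1)
  | D :: w, j => nBefore w j

/-- number of `E`s occurring before the `(i+1)`-st `N` (`i` is 0-indexed). -/
def eBefore : List Step → ℕ → ℕ
  | [], _ => 0
  | E :: w, i => 1 + eBefore w i
  | N :: w, i => if i = 0 then 0 else eBefore w (i-1)
  | D :: w, i => eBefore w i

/-- number of `D`s occurring after the `e`-th `E` (`e` is 1-indexed). -/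
def dAfterE : List Step → ℕ → ℕ
  | [], _ => 0
  | E :: w, e => if e ≤ 1 then cnt D w else dAfterE w (e-1)
  | D :: w, e => dAfterE w e
  | N :: w, e => dAfterE w e

/-- Combined computation of `bounce(Γ(γ)) + numph(γ)` along the bounce path of
`Γ(γ)`.  Here `g` is the Schröder path, `w = Γ(g)` is the underlying Dyck path,
`nn` its size; the bounce path has corners (peaks) at the positions
`j₀ = 0, jₖ₊₁ = nBefore w jₖ`; each intermediate return `jₖ₊₁ < nn` contributes
`nn - jₖ₊₁` to the bounce of `Γ(g)`, and the peak with corner at `jₖ` is the start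
of the `(jₖ+1)`-st east step, contributing to numph the number of diagonal steps of
`g` above it, i.e. after that east step. -/
def bounceAux (g w : List Step) (nn : ℕ) : ℕ → ℕ → ℕ
  | 0, _ => 0
  | fuel+1, j =>
      dAfterE g (j+1) +
        (if nn ≤ nBefore w j ∨ nBefore w j ≤ j then 0
         else (nn - nBefore w j) + bounceAux g w nn fuel (nBefore w j))

/-- the bounce statistic of a Schröder path: `bounce(Γ(γ)) + numph(γ)` -/
def bounce (g : List Step) : ℕ :=
  let w := g.filter (fun s => s ≠ D)
  let nn := cnt E w
  if nn = 0 then 0 else bounceAux g w nn g.length 0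

/-- the (signed) area coordinate `a_i = m·i - (#E before the (i+1)-st N)` of line `i`
(0-indexed) for a path in an `n × mn` grid. -/
def aLine (m : ℕ) (g : List Step) (i : ℕ) : ℤ := (m : ℤ) * i - eBefore g i

/-- an `(n, mn)`-Dyck path: `n` north steps, `mn` east steps, no diagonal steps,
staying weakly above the main diagonal. -/
def IsParkingPath (n m : ℕ) (g : List Step) : Prop :=
  (∀ s ∈ g, s ≠ D) ∧ cnt N g = n ∧ cnt E g = m * n ∧
    ∀ p : List Step, p <+: g → cnt E p ≤ m * cnt N p

/-- an `(n, mn)`-parking function: an `(n,mn)`-Dyck path labelled by a permutation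
`w` of `{0, …, n-1}` whose labels increase within each column. -/
def IsParking (n m : ℕ) (g : List Step) (w : Fin n → Fin n) : Prop :=
  IsParkingPath n m g ∧ Function.Bijective w ∧
    ∀ i j : Fin n, (j : ℕ) = (i : ℕ) + 1 → eBefore g (i : ℕ) = eBefore g (j : ℕ) → w i < w j

/-- the diagonal inversion statistic of an `(n, mn)`-parking function -/
def dinv (n m : ℕ) (g : List Step) (w : Fin n → Fin n) : ℤ :=
  ∑ i : Fin n, ∑ j : Fin n,
    if (i : ℕ) < (j : ℕ) then
      (if w i < w j then max 0 ((m : ℤ) - |aLine m g (i : ℕ) - aLine m g (j : ℕ)|) else 0) +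
        (if w j < w i then max 0 ((m : ℤ) - |aLine m g (j : ℕ) - aLine m g (i : ℕ) + 1|) else 0)
    else 0

/-- the number of descents of the word `w` -/
def desNum (n : ℕ) (w : Fin n → Fin n) : ℕ :=
  ((Finset.range (n-1)).filter fun i =>
    ∃ hj : i + 1 < n, w ⟨i+1, hj⟩ < w ⟨i, Nat.lt_of_succ_lt hj⟩).card

/-- the major index of the word `w` (with positions 1-indexed as usual) -/
def majStat (n : ℕ) (w : Fin n → Fin n) : ℕ :=
  ∑ i ∈ (Finset.range (n-1)).filter (fun i =>
    ∃ hj : i + 1 < n, w ⟨i+1, hj⟩ < w ⟨i, Nat.lt_of_succ_lt hj⟩), (i+1)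

/-- the reading word of a labelled path in an `n × mn` grid: labels are read along
diagonals parallel to the main diagonal, starting with the farthest diagonal,
each diagonal being read from top-right to bottom-left. -/
def readWord (n m : ℕ) (g : List Step) (lab : ℕ → ℕ) : List ℕ :=
  ((List.range (m * n + 1)).map fun k =>
    (((List.range n).reverse.filter fun i => aLine m g i = (m * n : ℤ) - k).map lab)).flatten

/-- the labelling function `ℕ → ℕ` associated to a permutation of `Fin n` -/
def labOf {n : ℕ} (w : Fin n → Fin n) : ℕ → ℕ :=
  fun i => if h : i < n then (w ⟨i, h⟩ : ℕ) else 0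

/-- one step of the algorithm `φ`, on the reversed word: find the rightmost
(i.e. first in the reversed word) east step not followed by an east step,
and swap it with the letter following it. -/
def phiRevAux : List Step → List Step
  | a :: E :: t => if a ≠ E then E :: a :: t else a :: phiRevAux (E :: t)
  | a :: t => a :: phiRevAux t
  | [] => []

/-- one step of the algorithm `φ` -/
def phiStep (w : List Step) : List Step := (phiRevAux w.reverse).reverse

/-- the sequence `φ(γ) = (γ₀, γ₁, …, γ_{bounce γ})` produced by the algorithm -/
def phiSeq (g : List Step) : List (List Step) :=
  (List.range (bounce g + 1)).map fun i => phiStep^[i] g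

/-- the union of all sequences `φ(γ)` over area-0 Schröder paths with `n` blocks -/
def phiUniv (n : ℕ) : Set (List Step) :=
  {p | ∃ g, IsNED g ∧ cnt N g + cnt D g = n ∧ p ∈ phiSeq g}

/-- the map replacing each block `NE` by `N` and each `D` by `E` -/
def theta : List Step → List Step
  | N :: E :: w => N :: theta w
  | D :: w => E :: theta w
  | _ :: w => theta w
  | [] => []

/-- the cells of the hook-shaped Young diagram `(d, 1^{n-d})` (row 0 is the arm). -/
def hookCells (n d : ℕ) : Finset (ℕ × ℕ) :=
  ((Finset.range d).image fun c => ((0 : ℕ), c)) ∪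
    ((Finset.range (n - d + 1)).image fun r => (r, (0 : ℕ)))

/-- a standard Young tableau of hook shape `(d, 1^{n-d})`: `pos i` is the cell
`(row, column)` containing the entry `i+1`; entries increase along rows and columns. -/
structure HookSYT (n d : ℕ) where
  pos : Fin n → ℕ × ℕ
  mem : ∀ i, pos i ∈ hookCells n d
  inj : Function.Injective pos
  rowInc : ∀ i j : Fin n, (pos i).1 = (pos j).1 → (pos i).2 < (pos j).2 → i < j
  colInc : ∀ i j : Fin n, (pos i).2 = (pos j).2 → (pos i).1 < (pos j).1 → i < j

/-- the descent set of a standard Young tableau: entries `i ∈ {1, …, n-1}` such that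
the entry `i+1` lies in a strictly higher row than `i`. -/
def Des {n d : ℕ} (τ : HookSYT n d) : Finset ℕ :=
  (Finset.Icc 1 (n-1)).filter fun i =>
    ∃ hi : i < n, ∃ hi' : i - 1 < n, (τ.pos ⟨i - 1, hi'⟩).1 < (τ.pos ⟨i, hi⟩).1

/-- the major index of a standard Young tableau -/
def majT {n d : ℕ} (τ : HookSYT n d) : ℕ := ∑ i ∈ Des τ, i

/-- the number of descents of a standard Young tableau -/
def desT {n d : ℕ} (τ : HookSYT n d) : ℕ := (Des τ).card

/-- the maximum of the descent set -/
def maxDes {n d : ℕ} (τ : HookSYT n d) : ℕ := (Des τ).sup id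

/-- the map `M_{n,d}`: the path `γ₁γ₂⋯γₙ` with `γₙ = NE`, `γ_{n-i} = NE` if
`i ∈ Des τ` and `γ_{n-i} = D` otherwise -/
def Mmap (n d : ℕ) (τ : HookSYT n d) : List Step :=
  (((List.range n).map fun j =>
    if j = n - 1 then [N, E]
    else if (n - 1 - j) ∈ Des τ then [N, E] else [D])).flatten

/-- the map `S_{n,d}`: the path `γ₁⋯γ_{n-1}` with `γ_{n-i} = NNEE` if
`i = max Des τ` and `1 ∈ Des τ`, `γ_{n-i} = NDE` if `i = max Des τ` and
`1 ∉ Des τ`, `γ_{n-i} = NE` if `i = 1` or `i ∈ Des τ ∖ {max Des τ}`, and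
`γ_{n-i} = D` otherwise. -/
def Smap (n d : ℕ) (τ : HookSYT n d) : List Step :=
  (((List.range (n-1)).map fun j =>
    if (n - 1 - j) = maxDes τ then (if 1 ∈ Des τ then [N,N,E,E] else [N,D,E])
    else if (n - 1 - j) = 1 ∨ (n - 1 - j) ∈ Des τ then [N,E] else [D])).flatten

/-- the set `V_{n,d}` of Schröder paths of the form `Dʲ NNEE u` or `Dʲ NDE u`
with `u ∈ {NE,D}* NE`, having `n-d+1` north steps and `d-1` diagonal steps. -/
def Vset (n d : ℕ) : Set (List Step) :=
  {g | (∃ j u, IsNED u ∧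
      (g = List.replicate j D ++ [N,N,E,E] ++ (u ++ [N,E]) ∨
       g = List.replicate j D ++ [N,D,E] ++ (u ++ [N,E]))) ∧
     cnt N g = n - d + 1 ∧ cnt D g = d - 1}

/-- Schröder paths in an `n × n` grid with `dd` diagonal steps, area `a`,
ending with `NE` -/
def SchT (n dd a : ℕ) : Set (List Step) :=
  {g | IsSchroeder g ∧ cnt D g = dd ∧ cnt N g = n - dd ∧ area g = a ∧ ∃ u, g = u ++ [N, E]}

/-- the 'upper' forms: `Dʲ NNEE γ' NE NE` or `γ' NE Dʲ NNEE γ''` -/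
def UpperForm (g : List Step) : Prop :=
  (∃ j u, IsNED u ∧ g = List.replicate j D ++ [N,N,E,E] ++ u ++ [N,E,N,E]) ∨
  (∃ u j v, IsNED u ∧ g = u ++ [N,E] ++ List.replicate j D ++ [N,N,E,E] ++ v)

/-- the 'lower' forms: `Dʲ NNEE γ' D NE` or `γ' NDE Dʲ NE γ''` -/
def LowerForm (g : List Step) : Prop :=
  (∃ j u, IsNED u ∧ g = List.replicate j D ++ [N,N,E,E] ++ u ++ [D,N,E]) ∨
  (∃ u j v, IsNED u ∧ g = u ++ [N,D,E] ++ List.replicate j D ++ [N,E] ++ v)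

/-- the number of distinct columns of the path -/
def Tcols (n : ℕ) (g : List Step) : ℕ :=
  ((Finset.range n).image fun i => eBefore g i).card

/-- the `q`-integer `[k]_q = 1 + q + ⋯ + q^{k-1}` as a polynomial -/
noncomputable def qInt (k : ℕ) : Polynomial ℤ := ∑ i ∈ Finset.range k, Polynomial.X ^ i

/-- the `q`-factorial `[k]!_q` -/
noncomputable def qFact (k : ℕ) : Polynomial ℤ := ∏ i ∈ Finset.range k, qInt (i+1)

section Aux
open Step List

/-! ### basic counting lemmas -/

lemma cnt_cons (s x : Step) (l : List Step) :
    cnt s (x :: l) = cnt s l + if x = s then 1 else 0 := by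
  simp [cnt, List.count_cons]

lemma length_eq_cnt (l : List Step) : l.length = cnt N l + cnt E l + cnt D l := by
  induction l with
  | nil => rfl
  | cons x l ih => cases x <;> simp [cnt, List.count_cons] at * <;> omega

lemma cnt_append (s : Step) (l₁ l₂ : List Step) :
    cnt s (l₁ ++ l₂) = cnt s l₁ + cnt s l₂ := List.count_append ..

/-- the non-`E` letters of a word, in order -/
def Os (g : List Step) : List Step := g.filter (fun s => s ≠ E)

abbrev repE (k : ℕ) : List Step := List.replicate k E

lemma Os_nil : Os [] = [] := rfl
lemma Os_cons_N (l : List Step) : Os (N :: l) = N :: Os l := rfl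
lemma Os_cons_D (l : List Step) : Os (D :: l) = D :: Os l := rfl
lemma Os_cons_E (l : List Step) : Os (E :: l) = Os l := rfl

lemma mem_Os_ne_E {l : List Step} {x : Step} (h : x ∈ Os l) : x ≠ E := by
  have := List.of_mem_filter h
  simpa using this

lemma cnt_N_Os (l : List Step) : cnt N (Os l) = cnt N l := by
  induction l with
  | nil => rfl
  | cons x l ih =>
    cases x <;> simp only [Os_cons_N, Os_cons_D, Os_cons_E, cnt_cons, ih] <;> simp

lemma cnt_D_Os (l : List Step) : cnt D (Os l) = cnt D l := by
  induction l with
  | nil => rfl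
  | cons x l ih =>
    cases x <;> simp only [Os_cons_N, Os_cons_D, Os_cons_E, cnt_cons, ih] <;> simp

lemma cnt_E_Os (l : List Step) : cnt E (Os l) = 0 := by
  induction l with
  | nil => rfl
  | cons x l ih =>
    cases x <;> simp only [Os_cons_N, Os_cons_D, Os_cons_E, cnt_cons, ih] <;> simp

lemma cnt_E_repE (k : ℕ) : cnt E (repE k) = k := by simp [cnt, List.count_replicate]
lemma cnt_N_repE (k : ℕ) : cnt N (repE k) = 0 := by simp [cnt, List.count_replicate]
lemma cnt_D_repE (k : ℕ) : cnt D (repE k) = 0 := by simp [cnt, List.count_replicate]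

lemma length_Os (l : List Step) : (Os l).length = cnt N l + cnt D l := by
  have h3 := length_eq_cnt (Os l)
  rw [cnt_E_Os, cnt_N_Os, cnt_D_Os] at h3
  omega

lemma sorted_perm (l : List Step) : (Os l ++ repE (cnt E l)).Perm l := by
  induction l with
  | nil => simp [Os, cnt]
  | cons x l ih =>
    cases x with
    | E =>
      have h1 : cnt E (E :: l) = cnt E l + 1 := by simp [cnt_cons]
      rw [Os_cons_E, h1]
      calc Os l ++ repE (cnt E l + 1) = Os l ++ E :: repE (cnt E l) := by
            simp [repE, ← List.replicate_succ]
        _ ~ E :: (Os l ++ repE (cnt E l)) := List.perm_middle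
        _ ~ E :: l := ih.cons E
    | N =>
      have h1 : cnt E (N :: l) = cnt E l := by simp [cnt_cons]
      rw [Os_cons_N, h1]
      exact (ih.cons N)
    | D =>
      have h1 : cnt E (D :: l) = cnt E l := by simp [cnt_cons]
      rw [Os_cons_D, h1]
      exact (ih.cons D)

lemma filter_ND {l : List Step} (h : ∀ x ∈ l, x ≠ E) :
    l.filter (fun s => s ≠ D) = List.replicate (cnt N l) N := by
  induction l with
  | nil => rfl
  | cons x l ih =>
    have hx := h x (by simp)
    have ih' := ih (fun y hy => h y (by simp [hy]))
    cases x with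
    | E => exact absurd rfl hx
    | N =>
      rw [show cnt N (N :: l) = cnt N l + 1 by simp [cnt_cons]]
      rw [List.filter_cons_of_pos (by simp), ih']
      simp [List.replicate_succ]
    | D =>
      rw [show cnt N (D :: l) = cnt N l by simp [cnt_cons]]
      rw [List.filter_cons_of_neg (by simp), ih']

end Aux
section Aux2
open Step List

/-! ### phiRevAux lemmas -/

lemma phiRevAux_nil : phiRevAux [] = [] := rfl
lemma phiRevAux_singleton (a : Step) : phiRevAux [a] = [a] := by cases a <;> rfl

lemma phiRevAux_E_cons (t : List Step) : phiRevAux (E :: t) = E :: phiRevAux t := by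
  cases t with
  | nil => rfl
  | cons b t' => cases b <;> simp [phiRevAux]

lemma phiRevAux_swap {a : Step} (t : List Step) (h : a ≠ E) :
    phiRevAux (a :: E :: t) = E :: a :: t := by
  simp [phiRevAux, h]

lemma phiRevAux_cons_cons {b : Step} (a : Step) (t : List Step) (h : b ≠ E) :
    phiRevAux (a :: b :: t) = a :: phiRevAux (b :: t) := by
  cases b <;> simp_all [phiRevAux]

lemma phiRevAux_append_D (r : List Step) :
    phiRevAux (r ++ [D]) = phiRevAux r ++ [D] := by
  induction r with
  | nil => rfl
  | cons a r ih =>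
    cases r with
    | nil =>
      rw [phiRevAux_singleton]
      simpa [phiRevAux_singleton] using phiRevAux_cons_cons a [] (by simp : (D:Step) ≠ E)
    | cons b r' =>
      simp only [List.cons_append] at ih ⊢
      by_cases hb : b = E
      · subst hb
        by_cases ha : a = E
        · subst ha
          rw [phiRevAux_E_cons (E :: (r' ++ [D])), phiRevAux_E_cons (E :: r'), ih]
          simp
        · rw [phiRevAux_swap _ ha, phiRevAux_swap _ ha]
          simp
      · rw [phiRevAux_cons_cons a _ hb, phiRevAux_cons_cons a _ hb, ih]
        simp

lemma phiRevAux_append_of_ne {r : List Step} (hr : phiRevAux r ≠ r) (s : List Step) :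
    phiRevAux (r ++ s) = phiRevAux r ++ s := by
  induction r with
  | nil => simp [phiRevAux_nil] at hr
  | cons a r ih =>
    cases r with
    | nil => rw [phiRevAux_singleton] at hr; exact absurd rfl hr
    | cons b r' =>
      simp only [List.cons_append] at ih ⊢
      by_cases hb : b = E
      · subst hb
        by_cases ha : a = E
        · subst ha
          rw [phiRevAux_E_cons] at hr
          have hr' : phiRevAux (E :: r') ≠ E :: r' := fun hc => hr (by rw [hc])
          rw [phiRevAux_E_cons (E :: (r' ++ s)), phiRevAux_E_cons (E :: r'), ih hr']
          simp
        · rw [phiRevAux_swap _ ha, phiRevAux_swap _ ha]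
          simp
      · rw [phiRevAux_cons_cons a _ hb] at hr
        have hr' : phiRevAux (b :: r') ≠ b :: r' := fun hc => hr (by rw [hc])
        rw [phiRevAux_cons_cons a _ hb, phiRevAux_cons_cons a _ hb, ih hr']
        simp

lemma phiRevAux_mid {m : List Step} (hm : ∀ x ∈ m, x ≠ E) {a : Step} (ha : a ≠ E)
    (r : List Step) :
    ∀ k, phiRevAux (repE k ++ (m ++ a :: E :: r)) = repE k ++ (m ++ E :: a :: r) := by
  intro k
  induction k with
  | zero =>
    simp only [repE, List.replicate, List.nil_append]
    induction m with
    | nil => simpa using phiRevAux_swap r ha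
    | cons b m' ihm =>
      have hb : b ≠ E := hm b (by simp)
      have ihm' := ihm (fun y hy => hm y (by simp [hy]))
      simp only [List.cons_append] at ihm' ⊢
      cases m' with
      | nil =>
        simp only [List.nil_append] at ihm' ⊢
        rw [phiRevAux_cons_cons b _ ha, ihm']
      | cons c m'' =>
        have hc : c ≠ E := hm c (by simp)
        simp only [List.cons_append] at ihm' ⊢
        rw [phiRevAux_cons_cons b _ hc, ihm']
  | succ k ih =>
    have h1 : repE (k+1) = E :: repE k := by simp [repE, List.replicate_succ]
    rw [h1, List.cons_append, phiRevAux_E_cons, ih, List.cons_append]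

/-! ### phiStep lemmas -/

lemma phiStep_D_cons (p : List Step) : phiStep (D :: p) = D :: phiStep p := by
  unfold phiStep
  rw [List.reverse_cons, phiRevAux_append_D, List.reverse_append]
  rfl

lemma phiStep_ne_rev {p : List Step} (h : phiStep p ≠ p) :
    phiRevAux p.reverse ≠ p.reverse := by
  intro hc
  apply h
  unfold phiStep
  rw [hc, List.reverse_reverse]

lemma phiStep_NE_cons {p : List Step} (h : phiStep p ≠ p) :
    phiStep (N :: E :: p) = N :: E :: phiStep p := by
  unfold phiStep
  have h1 : (N :: E :: p).reverse = p.reverse ++ [E, N] := by simp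
  rw [h1, phiRevAux_append_of_ne (phiStep_ne_rev h), List.reverse_append]
  rfl

lemma phiStep_phase2 {A B : List Step} (hB : ∀ x ∈ B, x ≠ E)
    {x : Step} (hx : x ≠ E) (k : ℕ) :
    phiStep (N :: (A ++ E :: (x :: B) ++ repE k)) =
      N :: ((A ++ [x]) ++ E :: B ++ repE k) := by
  unfold phiStep
  have h1 : (N :: (A ++ E :: (x :: B) ++ repE k)).reverse =
      repE k ++ (B.reverse ++ x :: E :: (A.reverse ++ [N])) := by
    simp [repE]
  have h2 : ∀ y ∈ B.reverse, y ≠ E := fun y hy => hB y (List.mem_reverse.mp hy)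
  rw [h1, phiRevAux_mid h2 hx (A.reverse ++ [N])]
  simp [repE]

end Aux2
section Aux3
open Step List

/-! ### area lemmas -/

lemma areaAux_N (h : ℕ) (w : List Step) : areaAux h (N :: w) = h + areaAux (h+1) w := rfl
lemma areaAux_E (h : ℕ) (w : List Step) : areaAux h (E :: w) = areaAux (h-1) w := rfl
lemma areaAux_D (h : ℕ) (w : List Step) : areaAux h (D :: w) = h + areaAux h w := rfl

lemma area_D_cons (p : List Step) : area (D :: p) = area p := by
  simp [area, areaAux]

lemma area_NE_cons (p : List Step) : area (N :: E :: p) = area p := by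
  simp [area, areaAux]

lemma areaAux_repE (k h : ℕ) : areaAux h (repE k) = 0 := by
  induction k generalizing h with
  | zero => rfl
  | succ k ih => simp [repE, List.replicate_succ, areaAux, ih]

lemma areaAux_noE_append {A : List Step} (hA : ∀ x ∈ A, x ≠ E) (h : ℕ) (r : List Step) :
    areaAux h (A ++ r) = areaAux h A + areaAux (h + cnt N A) r := by
  induction A generalizing h with
  | nil => simp [areaAux, cnt]
  | cons x A ih =>
    have hx := hA x (by simp)
    have ih' := ih (fun y hy => hA y (by simp [hy]))
    cases x with
    | E => exact absurd rfl hx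
    | N =>
      rw [List.cons_append, areaAux_N, areaAux_N, ih' (h+1),
        show cnt N (N :: A) = cnt N A + 1 by simp [cnt_cons]]
      ring_nf
    | D =>
      rw [List.cons_append, areaAux_D, areaAux_D, ih' h,
        show cnt N (D :: A) = cnt N A by simp [cnt_cons]]
      ring

lemma area_W {A B : List Step} (hA : ∀ x ∈ A, x ≠ E) (hB : ∀ x ∈ B, x ≠ E) (k : ℕ) :
    area (N :: (A ++ E :: B ++ repE k)) = areaAux 1 A + areaAux (cnt N A) B := by
  rw [area, areaAux_N]
  simp only [List.append_assoc, List.cons_append, List.nil_append]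
  rw [areaAux_noE_append hA 1, areaAux_E, areaAux_noE_append hB, areaAux_repE]
  simp

lemma area_W_succ {A B : List Step} (hA : ∀ x ∈ A, x ≠ E) (hB : ∀ x ∈ B, x ≠ E)
    {x : Step} (hx : x ≠ E) (k : ℕ) :
    area (N :: ((A ++ [x]) ++ E :: B ++ repE k)) =
      area (N :: (A ++ E :: (x :: B) ++ repE k)) + 1 := by
  have hA' : ∀ y ∈ A ++ [x], y ≠ E := by
    intro y hy
    rcases List.mem_append.mp hy with h' | h'
    · exact hA y h'
    · simp at h'; subst h'; exact hx
  have hB' : ∀ y ∈ x :: B, y ≠ E := by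
    intro y hy
    rcases List.mem_cons.mp hy with h' | h'
    · subst h'; exact hx
    · exact hB y h'
  rw [area_W hA' hB, area_W hA hB']
  rw [areaAux_noE_append hA 1 [x]]
  cases x with
  | E => exact absurd rfl hx
  | N =>
    rw [show cnt N (A ++ [N]) = cnt N A + 1 by simp [cnt_append, cnt]]
    rw [areaAux_N, areaAux_N]
    simp [areaAux]
    ring
  | D =>
    rw [show cnt N (A ++ [D]) = cnt N A by simp [cnt_append, cnt]]
    rw [areaAux_D, areaAux_D]
    simp [areaAux]
    ring

/-! ### dAfterE and nBefore lemmas -/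

lemma dAfterE_N (p : List Step) (e : ℕ) : dAfterE (N :: p) e = dAfterE p e := rfl
lemma dAfterE_D (p : List Step) (e : ℕ) : dAfterE (D :: p) e = dAfterE p e := rfl
lemma dAfterE_E_one (p : List Step) : dAfterE (E :: p) 1 = cnt D p := by
  simp [dAfterE]
lemma dAfterE_E_succ (p : List Step) (e : ℕ) :
    dAfterE (E :: p) (e + 2) = dAfterE p (e + 1) := by
  simp [dAfterE]

lemma dAfterE_noE_append {A : List Step} (hA : ∀ x ∈ A, x ≠ E) (p : List Step) (e : ℕ) :
    dAfterE (A ++ p) e = dAfterE p e := by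
  induction A with
  | nil => rfl
  | cons x A ih =>
    have hx := hA x (by simp)
    have ih' := ih (fun y hy => hA y (by simp [hy]))
    cases x with
    | E => exact absurd rfl hx
    | N => rw [List.cons_append, dAfterE_N, ih']
    | D => rw [List.cons_append, dAfterE_D, ih']

lemma dAfterE_repE (k e : ℕ) : dAfterE (repE k) e = 0 := by
  induction k generalizing e with
  | zero => rfl
  | succ k ih =>
    rw [show repE (k+1) = E :: repE k by simp [repE, List.replicate_succ]]
    by_cases he : e ≤ 1
    · simp [dAfterE, he, cnt_D_repE]
    · simp only [dAfterE, if_neg he]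
      exact ih _

lemma nBefore_N (w : List Step) (j : ℕ) : nBefore (N :: w) j = 1 + nBefore w j := rfl
lemma nBefore_D (w : List Step) (j : ℕ) : nBefore (D :: w) j = nBefore w j := rfl
lemma nBefore_E_zero (w : List Step) : nBefore (E :: w) 0 = 0 := by simp [nBefore]
lemma nBefore_E_succ (w : List Step) (j : ℕ) :
    nBefore (E :: w) (j + 1) = nBefore w j := by simp [nBefore]

lemma nBefore_repN (m : ℕ) (w : List Step) (j : ℕ) :
    nBefore (List.replicate m N ++ w) j = m + nBefore w j := by
  induction m with
  | zero => simp
  | succ m ih =>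
    rw [List.replicate_succ, List.cons_append, nBefore_N, ih]
    ring

lemma nBefore_repE (k j : ℕ) : nBefore (repE k) j = 0 := by
  induction k generalizing j with
  | zero => rfl
  | succ k ih =>
    rw [show repE (k+1) = E :: repE k by simp [repE, List.replicate_succ]]
    cases j with
    | zero => exact nBefore_E_zero _
    | succ j => rw [nBefore_E_succ]; exact ih j

end Aux3
section Aux4
open Step List

/-! ### bounceAux lemmas -/

lemma bounceAux_zero (g w : List Step) (nn j : ℕ) : bounceAux g w nn 0 j = 0 := rfl

lemma bounceAux_succ (g w : List Step) (nn f j : ℕ) :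
    bounceAux g w nn (f+1) j =
      dAfterE g (j+1) +
        (if nn ≤ nBefore w j ∨ nBefore w j ≤ j then 0
         else (nn - nBefore w j) + bounceAux g w nn f (nBefore w j)) := rfl

lemma bounceAux_fuel (g w : List Step) (nn : ℕ) :
    ∀ f1 f2 j, nn - j < f1 → nn - j < f2 →
      bounceAux g w nn f1 j = bounceAux g w nn f2 j := by
  intro f1
  induction f1 with
  | zero => intro f2 j h1 h2; omega
  | succ k ih =>
    intro f2 j h1 h2
    cases f2 with
    | zero => omega
    | succ l =>
      rw [bounceAux_succ, bounceAux_succ]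
      by_cases hc : nn ≤ nBefore w j ∨ nBefore w j ≤ j
      · rw [if_pos hc, if_pos hc]
      · rw [if_neg hc, if_neg hc]
        push_neg at hc
        have h3 : j < nBefore w j := hc.2
        have h4 : nBefore w j < nn := hc.1
        rw [ih l (nBefore w j) (by omega) (by omega)]

lemma bounceAux_D_cons (p w : List Step) (nn : ℕ) :
    ∀ f j, bounceAux (D :: p) w nn f j = bounceAux p w nn f j := by
  intro f
  induction f with
  | zero => intro j; rfl
  | succ k ih =>
    intro j
    rw [bounceAux_succ, bounceAux_succ, dAfterE_D, ih]

lemma bounceAux_shift (p w : List Step) (nn : ℕ) :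
    ∀ f j, bounceAux (N :: E :: p) (N :: E :: w) (nn+1) f (j+1) = bounceAux p w nn f j := by
  intro f
  induction f with
  | zero => intro j; rfl
  | succ k ih =>
    intro j
    rw [bounceAux_succ, bounceAux_succ]
    have hd : dAfterE (N :: E :: p) (j + 1 + 1) = dAfterE p (j + 1) := by
      rw [dAfterE_N]
      simpa using dAfterE_E_succ p j
    have hnb : nBefore (N :: E :: w) (j+1) = 1 + nBefore w j := by
      rw [nBefore_N, nBefore_E_succ]
    rw [hd, hnb]
    by_cases hc : nn ≤ nBefore w j ∨ nBefore w j ≤ j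
    · rw [if_pos (by omega), if_pos hc]
    · rw [if_neg (by omega), if_neg hc]
      have : 1 + nBefore w j = nBefore w j + 1 := by omega
      rw [this, ih]
      omega

lemma cnt_E_filterD (p : List Step) : cnt E (p.filter (fun s => s ≠ D)) = cnt E p := by
  induction p with
  | nil => rfl
  | cons x p ih => cases x <;> simp_all [cnt_cons, List.filter_cons]

lemma cnt_N_filterD (p : List Step) : cnt N (p.filter (fun s => s ≠ D)) = cnt N p := by
  induction p with
  | nil => rfl
  | cons x p ih => cases x <;> simp_all [cnt_cons, List.filter_cons]

/-- `bounce` with explicit fuel, for words with as many `N`s as `E`s -/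
lemma bounce_eq_bounceAux {p : List Step} (hNE : cnt N p = cnt E p) (hnn : cnt E p ≠ 0)
    {f : ℕ} (hf : cnt E p < f) :
    bounce p = bounceAux p (p.filter (fun s => s ≠ D)) (cnt E p) f 0 := by
  have hlen : cnt E p < p.length := by
    have := length_eq_cnt p
    omega
  rw [bounce]
  simp only [cnt_E_filterD, if_neg hnn]
  exact bounceAux_fuel _ _ _ _ _ 0 (by omega) (by omega)

lemma bounce_D_cons {p : List Step} (hNE : cnt N p = cnt E p) :
    bounce (D :: p) = bounce p := by
  by_cases hnn : cnt E p = 0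
  · rw [bounce, bounce]
    have h1 : (D :: p).filter (fun s => s ≠ D) = p.filter (fun s => s ≠ D) := by
      simp [List.filter_cons]
    simp only [h1, cnt_E_filterD]
    rw [if_pos hnn, if_pos hnn]
  · have hNE' : cnt N (D :: p) = cnt E (D :: p) := by simpa [cnt_cons] using hNE
    have hE' : cnt E (D :: p) = cnt E p := by simp [cnt_cons]
    have h1 : (D :: p).filter (fun s => s ≠ D) = p.filter (fun s => s ≠ D) := by
      simp [List.filter_cons]
    rw [bounce_eq_bounceAux hNE' (by omega) (f := p.length + 2) (by
      have := length_eq_cnt p; simp [hE']; omega)]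
    rw [bounce_eq_bounceAux hNE hnn (f := p.length + 2) (by
      have := length_eq_cnt p; omega)]
    rw [h1, hE', bounceAux_D_cons]

lemma bounce_NE_cons {p : List Step} (hNE : cnt N p = cnt E p) :
    bounce (N :: E :: p) = cnt D p + cnt E p + bounce p := by
  have hNE' : cnt N (N :: E :: p) = cnt E (N :: E :: p) := by simp [cnt_cons]; omega
  have hE' : cnt E (N :: E :: p) = cnt E p + 1 := by simp [cnt_cons]
  have hfil : (N :: E :: p).filter (fun s => s ≠ D) =
      N :: E :: p.filter (fun s => s ≠ D) := by simp [List.filter_cons]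
  have hlen := length_eq_cnt p
  rw [bounce_eq_bounceAux hNE' (by omega) (f := p.length + 2) (by omega)]
  rw [hfil, hE', bounceAux_succ]
  have hd : dAfterE (N :: E :: p) 1 = cnt D p := by
    rw [dAfterE_N, dAfterE_E_one]
  have hnb : nBefore (N :: E :: (p.filter (fun s => s ≠ D))) 0 = 1 := by
    rw [nBefore_N, nBefore_E_zero]
  rw [hd, hnb]
  by_cases hnn : cnt E p = 0
  · rw [if_pos (by omega)]
    have : bounce p = 0 := by
      rw [bounce]
      simp only [cnt_E_filterD]
      rw [if_pos hnn]
    omega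
  · rw [if_neg (by omega)]
    have h1 : cnt E p + 1 - 1 = cnt E p := by omega
    have h2 : bounceAux (N :: E :: p) (N :: E :: p.filter (fun s => s ≠ D))
        (cnt E p + 1) (p.length + 1) 1 =
        bounceAux p (p.filter (fun s => s ≠ D)) (cnt E p) (p.length + 1) 0 := by
      have := bounceAux_shift p (p.filter (fun s => s ≠ D)) (cnt E p) (p.length + 1) 0
      simpa using this
    rw [h1, h2, ← bounce_eq_bounceAux hNE hnn (by omega)]
    omega

end Aux4
section Aux5
open Step List

lemma all_D_of_cnt_N_zero {B : List Step} (hB : ∀ x ∈ B, x ≠ E) (h : cnt N B = 0) :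
    cnt D B = B.length := by
  have := length_eq_cnt B
  have hE : cnt E B = 0 := by
    rw [cnt, List.count_eq_zero]
    intro hc; exact hB E hc rfl
  omega

lemma bounce_phase2 {A B : List Step} (hA : ∀ x ∈ A, x ≠ E) (hB : ∀ x ∈ B, x ≠ E)
    {k : ℕ} (hk : cnt N A + cnt N B = k) :
    bounce (N :: (A ++ E :: B ++ repE k)) = B.length := by
  set g := N :: (A ++ E :: B ++ repE k) with hg
  have hgflat : g = N :: (A ++ (E :: (B ++ repE k))) := by
    rw [hg]; simp
  -- counts of g
  have hcntN : cnt N g = k + 1 := by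
    rw [hgflat]
    simp [cnt_cons, cnt_append, cnt_N_repE]
    omega
  have hcntE : cnt E g = k + 1 := by
    rw [hgflat]
    have hEA : cnt E A = 0 := by
      rw [cnt, List.count_eq_zero]; intro hc; exact hA E hc rfl
    have hEB : cnt E B = 0 := by
      rw [cnt, List.count_eq_zero]; intro hc; exact hB E hc rfl
    simp [cnt_cons, cnt_append, cnt_E_repE, hEA, hEB]
  have hcntD : cnt D g = cnt D A + cnt D B := by
    rw [hgflat]
    simp [cnt_cons, cnt_append, cnt_D_repE]
  -- the filtered word
  have hw : g.filter (fun s => s ≠ D) =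
      List.replicate (cnt N A + 1) N ++ (E :: (List.replicate (cnt N B) N ++ repE k)) := by
    rw [hgflat]
    simp only [List.filter_cons, List.filter_append]
    rw [filter_ND hA, filter_ND hB]
    simp [List.replicate_succ, repE]
  set w := g.filter (fun s => s ≠ D) with hwdef
  -- key nBefore computations
  have hnb0 : nBefore w 0 = cnt N A + 1 := by
    rw [hw, nBefore_repN, nBefore_E_zero]
  have hnb1 : nBefore w (cnt N A + 1) = k + 1 := by
    rw [hw, nBefore_repN, nBefore_E_succ, nBefore_repN, nBefore_repE]
    omega
  -- key dAfterE computations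
  have hd1 : dAfterE g 1 = cnt D B := by
    rw [hgflat, dAfterE_N, dAfterE_noE_append hA, dAfterE_E_one, cnt_append, cnt_D_repE]
    omega
  have hd2 : dAfterE g (cnt N A + 2) = 0 := by
    rw [hgflat, dAfterE_N, dAfterE_noE_append hA]
    rw [dAfterE_E_succ (B ++ repE k) (cnt N A), dAfterE_noE_append hB, dAfterE_repE]
  -- assemble
  have hNEg : cnt N g = cnt E g := by rw [hcntN, hcntE]
  rw [bounce_eq_bounceAux hNEg (by omega) (f := k + 3) (by omega)]
  rw [← hwdef, hcntE, bounceAux_succ, hd1, hnb0]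
  have hlen := length_eq_cnt B
  have hE : cnt E B = 0 := by
    rw [cnt, List.count_eq_zero]; intro hc'; exact hB E hc' rfl
  by_cases hc : cnt N B = 0
  · rw [if_pos (by omega)]
    have := all_D_of_cnt_N_zero hB hc
    omega
  · rw [if_neg (by omega), bounceAux_succ, hnb1,
      show cnt N A + 1 + 1 = cnt N A + 2 from rfl, hd2, if_pos (by omega)]
    omega

end Aux5
section Aux6
open Step List

/-- explicit description of the `φ`-orbit of an `{NE,D}`-word -/
def orb : List Step → ℕ → List Step
  | D :: g, i => D :: orb g i
  | N :: E :: g, i =>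
      if i ≤ bounce g then N :: E :: orb g i
      else N :: ((Os g).take (i - bounce g) ++ E :: (Os g).drop (i - bounce g)
        ++ repE (cnt E g))
  | g, _ => g

lemma orb_D (g : List Step) (i : ℕ) : orb (D :: g) i = D :: orb g i := rfl

lemma orb_NE (g : List Step) (i : ℕ) :
    orb (N :: E :: g) i =
      if i ≤ bounce g then N :: E :: orb g i
      else N :: ((Os g).take (i - bounce g) ++ E :: (Os g).drop (i - bounce g)
        ++ repE (cnt E g)) := rfl

lemma W_step {l : List Step} (hl : ∀ x ∈ l, x ≠ E) {j : ℕ} (hj : j < l.length) (k : ℕ) :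
    phiStep (N :: (l.take j ++ E :: l.drop j ++ repE k)) =
      N :: (l.take (j+1) ++ E :: l.drop (j+1) ++ repE k) := by
  have hdrop : l.drop j = l[j] :: l.drop (j+1) := List.drop_eq_getElem_cons hj
  have htake : l.take (j+1) = l.take j ++ [l[j]] := by
    rw [List.take_succ, List.getElem?_eq_getElem hj]
    rfl
  have hx : l[j] ≠ E := hl _ (List.getElem_mem hj)
  have hB : ∀ x ∈ l.drop (j+1), x ≠ E := fun x hx' => hl x (List.mem_of_mem_drop hx')
  rw [hdrop, htake]
  exact phiStep_phase2 hB hx k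

lemma W_perm {l : List Step} (j k : ℕ) :
    (N :: (l.take j ++ E :: l.drop j ++ repE k)).Perm (N :: E :: (l ++ repE k)) := by
  apply List.Perm.cons N
  calc l.take j ++ E :: l.drop j ++ repE k
      = l.take j ++ E :: (l.drop j ++ repE k) := by simp
    _ ~ E :: (l.take j ++ (l.drop j ++ repE k)) := List.perm_middle
    _ = E :: (l ++ repE k) := by rw [← List.append_assoc, List.take_append_drop]

lemma W_area {l : List Step} (hl : ∀ x ∈ l, x ≠ E) (k : ℕ) :
    ∀ j, j ≤ l.length →
      area (N :: (l.take j ++ E :: l.drop j ++ repE k)) = area (l ++ repE k) + j := by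
  intro j
  induction j with
  | zero =>
    intro _
    simp only [List.take_zero, List.drop_zero, List.nil_append]
    rw [show (E :: l ++ repE k : List Step) = E :: (l ++ repE k) by simp, area_NE_cons]
    simp
  | succ j ih =>
    intro hj
    have hj' : j < l.length := by omega
    have hdrop : l.drop j = l[j] :: l.drop (j+1) := List.drop_eq_getElem_cons hj'
    have htake : l.take (j+1) = l.take j ++ [l[j]] := by
      rw [List.take_succ, List.getElem?_eq_getElem hj']
      rfl
    have hx : l[j] ≠ E := hl _ (List.getElem_mem hj')
    have hA : ∀ x ∈ l.take j, x ≠ E := fun x hx' => hl x (List.mem_of_mem_take hx')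
    have hB : ∀ x ∈ l.drop (j+1), x ≠ E := fun x hx' => hl x (List.mem_of_mem_drop hx')
    rw [htake, area_W_succ hA hB hx k, ← hdrop, ih (by omega)]
    omega

lemma W_bounce {l : List Step} (hl : ∀ x ∈ l, x ≠ E) {k : ℕ}
    (hk : cnt N l = k) (j : ℕ) :
    bounce (N :: (l.take j ++ E :: l.drop j ++ repE k)) = l.length - j := by
  have hA : ∀ x ∈ l.take j, x ≠ E := fun x hx' => hl x (List.mem_of_mem_take hx')
  have hB : ∀ x ∈ l.drop j, x ≠ E := fun x hx' => hl x (List.mem_of_mem_drop hx')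
  have hsum : cnt N (l.take j) + cnt N (l.drop j) = k := by
    rw [← cnt_append, List.take_append_drop, hk]
  rw [bounce_phase2 hA hB hsum, List.length_drop]

theorem orb_master {g : List Step} (h : IsNED g) :
    (cnt N g = cnt E g) ∧
    orb g 0 = g ∧
    orb g (bounce g) = Os g ++ repE (cnt E g) ∧
    (∀ i, i ≤ bounce g → (orb g i).Perm g) ∧
    (∀ i, i ≤ bounce g → area (orb g i) = i) ∧
    (∀ i, i ≤ bounce g → bounce (orb g i) = bounce g - i) ∧
    (∀ i, i < bounce g → phiStep (orb g i) = orb g (i+1)) := by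
  induction h with
  | nil =>
    have hb : bounce ([] : List Step) = 0 := by simp [bounce, cnt]
    refine ⟨rfl, rfl, ?_, ?_, ?_, ?_, ?_⟩
    · simp [hb, orb, Os, cnt, repE]
    · intro i _; simp [orb]
    · intro i hi
      rw [hb] at hi
      interval_cases i
      simp [orb, area, areaAux]
    · intro i hi
      rw [hb] at hi
      interval_cases i
      simp [orb, hb]
    · intro i hi; rw [hb] at hi; omega
  | @d t ht ih =>
    obtain ⟨hcnt, h0, hb, hperm, harea, hbounce, hstep⟩ := ih
    have hbD : bounce (D :: t) = bounce t := bounce_D_cons hcnt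
    refine ⟨?_, ?_, ?_, ?_, ?_, ?_, ?_⟩
    · simpa [cnt_cons] using hcnt
    · rw [orb_D, h0]
    · rw [hbD, orb_D, hb, Os_cons_D]
      simp [cnt_cons]
    · intro i hi
      rw [hbD] at hi
      rw [orb_D]
      exact (hperm i hi).cons D
    · intro i hi
      rw [hbD] at hi
      rw [orb_D, area_D_cons]
      exact harea i hi
    · intro i hi
      rw [hbD] at hi
      have hp := hperm i hi
      have hcnt' : cnt N (orb t i) = cnt E (orb t i) := by
        rw [cnt, cnt, hp.count_eq, hp.count_eq]
        exact hcnt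
      rw [orb_D, bounce_D_cons hcnt', hbD]
      exact hbounce i hi
    · intro i hi
      rw [hbD] at hi
      rw [orb_D, orb_D, phiStep_D_cons, hstep i hi]
  | @ne t ht ih =>
    obtain ⟨hcnt, h0, hb, hperm, harea, hbounce, hstep⟩ := ih
    have hB : bounce (N :: E :: t) = cnt D t + cnt E t + bounce t := bounce_NE_cons hcnt
    have hm : (Os t).length = cnt D t + cnt E t := by
      rw [length_Os]; omega
    set b' := bounce t with hb'
    set M := cnt D t + cnt E t with hM
    have hOsE : ∀ x ∈ Os t, x ≠ E := fun x hx => mem_Os_ne_E hx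
    have hcntOs : cnt N (Os t) = cnt E t := by rw [cnt_N_Os]; omega
    -- counts of orbit words of t
    have hcnt' : ∀ i, i ≤ b' → cnt N (orb t i) = cnt E (orb t i) := by
      intro i hi
      have hp := hperm i hi
      rw [cnt, cnt, hp.count_eq, hp.count_eq]
      exact hcnt
    -- phase-1 step words are not fixed
    have hne : ∀ i, i < b' → phiStep (orb t i) ≠ orb t i := by
      intro i hi hc
      have h1 := harea i (le_of_lt hi)
      have h2 := harea (i+1) (by omega)
      rw [hstep i hi] at hc
      rw [hc, h1] at h2
      omega
    -- area of t-sorted word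
    have hsortarea : area (Os t ++ repE (cnt E t)) = b' := by
      rw [← hb]
      exact harea b' le_rfl
    refine ⟨?_, ?_, ?_, ?_, ?_, ?_, ?_⟩
    · simp [cnt_cons]; omega
    · rw [orb_NE, if_pos (Nat.zero_le b'), h0]
    · -- orb at bounce is the sorted word
      rw [hB]
      by_cases hM0 : M = 0
      · have hOsnil : Os t = [] := List.length_eq_zero_iff.mp (by omega)
        have hMB' : cnt D t + cnt E t + b' = b' := by omega
        rw [orb_NE, if_pos (by omega), hMB', hb, hOsnil, Os_cons_N, Os_cons_E, hOsnil]
        simp [cnt_cons, repE, List.replicate_succ]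
      · rw [orb_NE, if_neg (by omega)]
        have h1 : cnt D t + cnt E t + b' - b' = M := by omega
        rw [h1, show (Os t).take M = Os t by rw [← hm]; exact List.take_length,
          show (Os t).drop M = [] by rw [← hm]; exact List.drop_length]
        rw [Os_cons_N, Os_cons_E]
        simp [cnt_cons, repE, List.replicate_succ]
    · -- permutation
      intro i hi
      rw [orb_NE]
      by_cases hip : i ≤ b'
      · rw [if_pos hip]
        exact ((hperm i hip).cons E).cons N
      · rw [if_neg hip]
        refine (W_perm _ _).trans ?_
        refine (((sorted_perm t).cons E).cons N)
    · -- area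
      intro i hi
      rw [orb_NE]
      by_cases hip : i ≤ b'
      · rw [if_pos hip, area_NE_cons]
        exact harea i hip
      · rw [if_neg hip]
        have hjle : i - b' ≤ (Os t).length := by rw [hB] at hi; omega
        rw [W_area hOsE (cnt E t) (i - b') hjle, hsortarea]
        omega
    · -- bounce
      intro i hi
      rw [orb_NE]
      by_cases hip : i ≤ b'
      · rw [if_pos hip]
        have hc := hcnt' i hip
        rw [bounce_NE_cons hc]
        have hD : cnt D (orb t i) = cnt D t := by
          rw [cnt, (hperm i hip).count_eq]; rfl
        have hE : cnt E (orb t i) = cnt E t := by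
          rw [cnt, (hperm i hip).count_eq]; rfl
        rw [hD, hE, hbounce i hip, hB]
        omega
      · rw [if_neg hip]
        rw [W_bounce hOsE hcntOs (i - b'), hm, hB]
        omega
    · -- phiStep
      intro i hi
      rw [hB] at hi
      by_cases hip : i < b'
      · rw [orb_NE, orb_NE, if_pos (by omega), if_pos (by omega)]
        rw [phiStep_NE_cons (hne i hip), hstep i hip]
      · -- phase 2 step
        have hjlt : i - b' < (Os t).length := by omega
        have hstep2 := W_step hOsE hjlt (cnt E t)
        by_cases hi0 : i ≤ b'
        · -- i = b'
          have hieq : i = b' := by omega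
          have h2 : i - b' = 0 := by omega
          rw [h2] at hstep2
          simp only [List.take_zero, List.drop_zero, List.nil_append,
            List.cons_append, Nat.zero_add] at hstep2
          rw [orb_NE, if_pos hi0, hieq, hb, orb_NE, if_neg (by omega),
            show b' + 1 - b' = 1 by omega]
          rw [hstep2]
        · rw [orb_NE, if_neg hi0, orb_NE, if_neg (by omega)]
          have h1 : i + 1 - b' = (i - b') + 1 := by omega
          rw [h1]
          exact hstep2
end Aux6
section Aux7
open Step List

lemma list_sum_range {M : Type*} [AddCommMonoid M] (f : ℕ → M) (n : ℕ) :
    ((List.range n).map f).sum = ∑ i ∈ Finset.range n, f i := by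
  induction n with
  | zero => simp
  | succ n ih => rw [List.range_succ, Finset.sum_range_succ, List.map_append,
      List.sum_append, ih]; simp

theorem stmt5' {R : Type*} [CommRing R] (q t : R) (g : List Step)
    (h : IsNED g) :
    ((phiSeq g).map fun p => q ^ bounce p * t ^ area p).sum =
      ∑ j ∈ Finset.range (bounce g + 1), q ^ (bounce g - j) * t ^ j := by
  obtain ⟨hcnt, h0, hb, hperm, harea, hbounce, hstep⟩ := orb_master h
  have hiter : ∀ i, i ≤ bounce g → phiStep^[i] g = orb g i := by
    intro i
    induction i with
    | zero => intro _; simpa using h0.symm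
    | succ i ih =>
      intro hi
      rw [Function.iterate_succ_apply', ih (by omega), hstep i (by omega)]
  rw [phiSeq, List.map_map, list_sum_range]
  apply Finset.sum_congr rfl
  intro j hj
  have hj' : j ≤ bounce g := Nat.lt_succ_iff.mp (Finset.mem_range.mp hj)
  simp only [Function.comp_apply]
  rw [hiter j hj', hbounce j hj', harea j hj']

end Aux7


/-- For any `γ ∈ {NE,D}^n`, the sum over the paths `γᵢ` of the sequence
`φ(γ)` of `q^{bounce(γᵢ)} t^{area(γᵢ)}` equals the Schur polynomial
`s_{(b)}(q,t) = q^b + q^{b-1}t + ⋯ + t^b`, where `b = bounce(γ)`. -/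
theorem stmt5 {R : Type*} [CommRing R] (q t : R) (n : ℕ) (g : List Step)
    (h : IsNED g) (hn : cnt Step.N g + cnt Step.D g = n) :
    ((phiSeq g).map fun p => q ^ bounce p * t ^ area p).sum =
      ∑ j ∈ Finset.range (bounce g + 1), q ^ (bounce g - j) * t ^ j := by
  exact stmt5' q t g h
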